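/- Let Π : (0,1) → ℝ be defined by Π(r) = V_0 · r^{Λ_N} + V(r) · Σ_{i=1}^{N} r^{Λ_{N|i}} (1 − r^{λ_i}) + ∫_r^1 V(t) [ (1 − N) Λ_N t^{Λ_N − 1} + Σ_{i=1}^{N} Λ_{N|i} t^{Λ_{N|i} − 1} ] dt, where V is continuously differentiable on (0,1). Then Π is differentiable on (0,1) and for every r ∈ (0,1), Π'(r) = Λ_N r^{Λ_N − 1} · [ V_0 − V(r) − (V'(r) · r / Λ_N) · Σ_{i=1}^{N} (1 − r^{−λ_i}) ]. -/

import Mathlib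

/-- The seller expected revenue function
`Π(r) = V_0 r^{Λ_N} + V(r) Σ_i r^{Λ_{N|i}}(1 − r^{λ_i})
  + ∫_r^1 V(t)[(1−N)Λ_N t^{Λ_N−1} + Σ_i Λ_{N|i} t^{Λ_{N|i}−1}] dt`
is differentiable on `(0,1)` with derivative
`Π'(r) = Λ_N r^{Λ_N−1} [V_0 − V(r) − (V'(r) r / Λ_N) Σ_i (1 − r^{−λ_i})]`. -/
theorem expected_revenue_hasDerivAt
    (N : ℕ) (hN : 2 ≤ N) (l : Fin N → ℝ) (hl : ∀ i, 0 < l i)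
    (Λ : ℝ) (hΛ : Λ = ∑ j, l j)
    (V V' : ℝ → ℝ)
    (hVcont : ContinuousOn V (Set.Icc 0 1))
    (hV' : ∀ r ∈ Set.Ioo (0:ℝ) 1, HasDerivAt V (V' r) r)
    (hV'cont : ContinuousOn V' (Set.Ioo 0 1))
    (V0 : ℝ)
    (revenue : ℝ → ℝ)
    (hrev : ∀ r, revenue r
      = V0 * r ^ Λ + V r * ∑ i, r ^ (Λ - l i) * (1 - r ^ (l i))
        + ∫ t in r..1, V t * ((1 - (N:ℝ)) * Λ * t ^ (Λ - 1)
            + ∑ i, (Λ - l i) * t ^ (Λ - l i - 1))) :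
    ∀ r ∈ Set.Ioo (0:ℝ) 1,
      HasDerivAt revenue
        (Λ * r ^ (Λ - 1) *
          (V0 - V r - (V' r * r / Λ) * ∑ i, (1 - r ^ (-(l i))))) r := by
  intro r hr
  obtain ⟨hr0, hr1⟩ := hr
  have hrne : r ≠ 0 := ne_of_gt hr0
  have hΛpos : 0 < Λ := by
    rw [hΛ]
    exact Finset.sum_pos (fun i _ => hl i) ⟨⟨0, by omega⟩, Finset.mem_univ _⟩
  -- the integrand
  set f : ℝ → ℝ := fun t => V t * ((1 - (N:ℝ)) * Λ * t ^ (Λ - 1)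
      + ∑ i, (Λ - l i) * t ^ (Λ - l i - 1)) with hf
  have hrevfun : revenue = fun s => V0 * s ^ Λ + V s * ∑ i, s ^ (Λ - l i) * (1 - s ^ (l i))
      + ∫ t in s..1, f t := funext hrev
  -- continuity of f on sets avoiding 0
  have hfcontOn : ∀ s : Set ℝ, s ⊆ Set.Ioc 0 1 → ContinuousOn f s := by
    intro s hs
    apply ContinuousOn.mul
    · exact hVcont.mono (hs.trans Set.Ioc_subset_Icc_self)
    · apply ContinuousOn.add
      · apply ContinuousOn.mul continuousOn_const
        intro x hx
        exact (Real.continuousAt_rpow_const x _ (Or.inl (ne_of_gt (hs hx).1))).continuousWithinAt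
      · apply continuousOn_finset_sum
        intro i _
        apply ContinuousOn.mul continuousOn_const
        intro x hx
        exact (Real.continuousAt_rpow_const x _ (Or.inl (ne_of_gt (hs hx).1))).continuousWithinAt
  have hfint : IntervalIntegrable f MeasureTheory.volume r 1 := by
    apply ContinuousOn.intervalIntegrable
    apply hfcontOn
    rw [Set.uIcc_of_le hr1.le]
    exact fun x hx => ⟨lt_of_lt_of_le hr0 hx.1, hx.2⟩
  have hfmeas : StronglyMeasurableAtFilter f (nhds r) MeasureTheory.volume :=
    ContinuousOn.stronglyMeasurableAtFilter isOpen_Ioo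
      (hfcontOn _ Set.Ioo_subset_Ioc_self) r ⟨hr0, hr1⟩
  have hfcontAt : ContinuousAt f r :=
    (hfcontOn (Set.Ioo 0 1) Set.Ioo_subset_Ioc_self).continuousAt
      (isOpen_Ioo.mem_nhds ⟨hr0, hr1⟩)
  have hInt : HasDerivAt (fun u => ∫ t in u..1, f t) (-f r) r :=
    intervalIntegral.integral_hasDerivAt_left hfint hfmeas hfcontAt
  -- first term
  have h1 : HasDerivAt (fun s : ℝ => V0 * s ^ Λ) (V0 * (Λ * r ^ (Λ - 1))) r :=
    (Real.hasDerivAt_rpow_const (p := Λ) (Or.inl hrne)).const_mul V0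
  -- sum term
  have hS : ∀ i : Fin N, HasDerivAt (fun s : ℝ => s ^ (Λ - l i) * (1 - s ^ (l i)))
      ((Λ - l i) * r ^ (Λ - l i - 1) * (1 - r ^ (l i))
        + r ^ (Λ - l i) * (0 - l i * r ^ (l i - 1))) r := by
    intro i
    exact (Real.hasDerivAt_rpow_const (p := Λ - l i) (Or.inl hrne)).mul
      ((hasDerivAt_const r (1:ℝ)).sub (Real.hasDerivAt_rpow_const (p := l i) (Or.inl hrne)))
  have h2 : HasDerivAt (fun s : ℝ => V s * ∑ i, s ^ (Λ - l i) * (1 - s ^ (l i)))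
      (V' r * (∑ i, r ^ (Λ - l i) * (1 - r ^ (l i)))
        + V r * ∑ i, ((Λ - l i) * r ^ (Λ - l i - 1) * (1 - r ^ (l i))
          + r ^ (Λ - l i) * (0 - l i * r ^ (l i - 1)))) r :=
    (hV' r ⟨hr0, hr1⟩).mul (HasDerivAt.fun_sum (fun i _ => hS i))
  have hD : HasDerivAt revenue
      (V0 * (Λ * r ^ (Λ - 1))
        + (V' r * (∑ i, r ^ (Λ - l i) * (1 - r ^ (l i)))
          + V r * ∑ i, ((Λ - l i) * r ^ (Λ - l i - 1) * (1 - r ^ (l i))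
            + r ^ (Λ - l i) * (0 - l i * r ^ (l i - 1))))
        + -f r) r := by
    rw [hrevfun]
    exact (h1.add h2).add hInt
  convert hD using 1
  -- rpow algebra
  have E1 : ∀ i : Fin N, r ^ (Λ - 1) * r * r ^ (-(l i)) = r ^ (Λ - l i) := by
    intro i
    rw [← Real.rpow_add_one hrne, ← Real.rpow_add hr0]
    congr 1 <;> ring
  have E2 : ∀ i : Fin N, r ^ (Λ - l i) * r ^ (l i) = r ^ (Λ - 1) * r := by
    intro i
    rw [← Real.rpow_add hr0, ← Real.rpow_add_one hrne]
    congr 1 <;> ring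
  have E3 : ∀ i : Fin N, r ^ (Λ - l i - 1) = r ^ (Λ - 1) * r ^ (-(l i)) := by
    intro i
    rw [← Real.rpow_add hr0]
    congr 1 <;> ring
  have E4 : ∀ i : Fin N, r ^ (Λ - l i - 1) * r ^ (l i) = r ^ (Λ - 1) := by
    intro i
    rw [← Real.rpow_add hr0]
    congr 1 <;> ring
  have E5 : ∀ i : Fin N, r ^ (Λ - l i) * r ^ (l i - 1) = r ^ (Λ - 1) := by
    intro i
    rw [← Real.rpow_add hr0]
    congr 1 <;> ring
  have hab : ∀ i : Fin N, r ^ (Λ - l i) * (1 - r ^ (l i))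
      = r ^ (Λ - 1) * r * r ^ (-(l i)) - r ^ (Λ - 1) * r := by
    intro i
    calc r ^ (Λ - l i) * (1 - r ^ (l i))
        = r ^ (Λ - l i) - r ^ (Λ - l i) * r ^ (l i) := by ring
      _ = r ^ (Λ - 1) * r * r ^ (-(l i)) - r ^ (Λ - 1) * r := by rw [E2, ← E1]
  have hab2 : ∀ i : Fin N,
      (Λ - l i) * r ^ (Λ - l i - 1) * (1 - r ^ (l i)) + r ^ (Λ - l i) * (0 - l i * r ^ (l i - 1))
        = (Λ - l i) * (r ^ (Λ - 1) * r ^ (-(l i))) - Λ * r ^ (Λ - 1) := by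
    intro i
    calc (Λ - l i) * r ^ (Λ - l i - 1) * (1 - r ^ (l i))
          + r ^ (Λ - l i) * (0 - l i * r ^ (l i - 1))
        = (Λ - l i) * r ^ (Λ - l i - 1) - (Λ - l i) * (r ^ (Λ - l i - 1) * r ^ (l i))
          - l i * (r ^ (Λ - l i) * r ^ (l i - 1)) := by ring
      _ = (Λ - l i) * (r ^ (Λ - 1) * r ^ (-(l i))) - (Λ - l i) * r ^ (Λ - 1)
          - l i * r ^ (Λ - 1) := by rw [E4, E5, E3]
      _ = (Λ - l i) * (r ^ (Λ - 1) * r ^ (-(l i))) - Λ * r ^ (Λ - 1) := by ring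
  have habf : f r = V r * ((1 - (N:ℝ)) * Λ * r ^ (Λ - 1)
      + ∑ i, (Λ - l i) * (r ^ (Λ - 1) * r ^ (-(l i)))) := by
    show V r * _ = _
    congr 2
    exact Finset.sum_congr rfl (fun i _ => by rw [E3])
  rw [Finset.sum_congr rfl (fun i _ => hab i), Finset.sum_congr rfl (fun i _ => hab2 i), habf]
  rw [Finset.sum_sub_distrib, Finset.sum_sub_distrib, Finset.sum_sub_distrib,
    ← Finset.mul_sum, Finset.sum_const, Finset.sum_const, Finset.sum_const]
  simp only [Finset.card_univ, Fintype.card_fin, nsmul_eq_mul]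
  set U := ∑ i : Fin N, r ^ (-(l i)) with hU
  set T := ∑ i : Fin N, (Λ - l i) * (r ^ (Λ - 1) * r ^ (-(l i))) with hT
  field_simp
  ring
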